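/- With A^k_h(u) as defined for even integer k, integer h, nonnegative integer u, one has the product representation A^k_h(u) = ((-1)^{k/2}/u!)·∏_{ℓ=k/2+1-u}^{max(0,k/2)} [(h-1/2)² - (ℓ-1/2)²], where an empty product equals 1. -/

import Mathlib

/-- Generalized binomial coefficient `C(z,n)` for integer `z`. -/
noncomputable def gbinom (z n : ℤ) : ℚ :=
  if 0 ≤ n then (∏ i ∈ Finset.range n.toNat, ((z : ℚ) - (i : ℚ))) / (Nat.factorial n.toNat : ℚ)
  else 0

/-- The coefficient `𝒜^k_h(u)` from the Fourier expansion of `E^*_k(z,h)`. -/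
noncomputable def Acoef (k h : ℤ) (u : ℕ) : ℚ :=
  if 0 ≤ k then
    (-1 : ℚ) ^ ((u : ℤ) + k / 2) * (Nat.factorial u : ℚ) *
      gbinom (k / 2 + h - 1) u * gbinom (k / 2 - h) u
  else
    (-1 : ℚ) ^ (u : ℤ) * ((Nat.factorial ((u : ℤ) - k / 2).toNat : ℚ)) ^ 2 /
      (Nat.factorial u : ℚ) * gbinom (h - 1) ((u : ℤ) - k / 2) * gbinom (-h) ((u : ℤ) - k / 2)

lemma prod_shift (a : ℤ) (u : ℕ) (f : ℤ → ℚ) :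
    ∏ ℓ ∈ Finset.Icc (a + 1 - u) a, f ℓ = ∏ i ∈ Finset.range u, f (a - i) := by
  induction u with
  | zero => simp
  | succ n ih =>
    have h2 : (a : ℤ) - n ≤ a := by omega
    have h3 : Finset.Ioc (a - n) a = Finset.Icc (a + 1 - n) a := by
      ext x; simp; omega
    have h4 : a + 1 - ((n : ℕ) + 1 : ℤ) = a - n := by ring
    rw [Finset.prod_range_succ, ← ih]
    push_cast
    rw [h4, ← Finset.Ioc_insert_left h2, Finset.prod_insert (by simp), h3, mul_comm]

theorem Acoef_prod_rep (k h : ℤ) (u : ℕ) (hk : 2 ∣ k) :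
    Acoef k h u = (-1 : ℚ) ^ (k / 2) / (Nat.factorial u : ℚ) *
      ∏ ℓ ∈ Finset.Icc (k / 2 + 1 - u) (max 0 (k / 2)),
        (((h : ℚ) - 1 / 2) ^ 2 - ((ℓ : ℚ) - 1 / 2) ^ 2) := by
  obtain ⟨m, rfl⟩ := hk
  have hm : (2 * m) / 2 = m := by omega
  have hfu : (Nat.factorial u : ℚ) ≠ 0 := by positivity
  rcases le_or_gt 0 m with hm0 | hm0
  · -- nonnegative case
    have hmax : max 0 m = m := by omega
    rw [Acoef, if_pos (by omega), hm, hmax]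
    rw [prod_shift]
    unfold gbinom
    rw [if_pos (by positivity), if_pos (by positivity)]
    simp only [Int.toNat_natCast]
    have hterm : ∀ i ∈ Finset.range u,
        ((h : ℚ) - 1 / 2) ^ 2 - (((m - (i:ℤ) : ℤ) : ℚ) - 1 / 2) ^ 2
          = (-1) * ((((m + h - 1 : ℤ) : ℚ) - i) * (((m - h : ℤ) : ℚ) - i)) := by
      intro i _
      push_cast
      ring
    rw [Finset.prod_congr rfl hterm, Finset.prod_mul_distrib, Finset.prod_mul_distrib,
      Finset.prod_const, Finset.card_range]
    rw [show ((u:ℤ) + m) = (u:ℤ) + m from rfl, zpow_add₀ (by norm_num : (-1:ℚ) ≠ 0),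
      zpow_natCast]
    field_simp
  · -- negative case
    have hmax : max 0 m = 0 := by omega
    rw [Acoef, if_neg (by omega), hm, hmax]
    set v : ℕ := ((u:ℤ) - m).toNat with hv
    have hvz : ((u:ℤ) - m) = (v : ℤ) := by omega
    rw [hvz]
    rw [show m + 1 - (u:ℤ) = 0 + 1 - (v:ℤ) by omega, prod_shift]
    unfold gbinom
    rw [if_pos (by positivity), if_pos (by positivity)]
    simp only [Int.toNat_natCast]
    have hterm : ∀ i ∈ Finset.range v,
        ((h : ℚ) - 1 / 2) ^ 2 - (((0 - (i:ℤ) : ℤ) : ℚ) - 1 / 2) ^ 2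
          = (-1) * ((((h - 1 : ℤ) : ℚ) - i) * (((-h : ℤ) : ℚ) - i)) := by
      intro i _
      push_cast
      ring
    rw [Finset.prod_congr rfl hterm, Finset.prod_mul_distrib, Finset.prod_mul_distrib,
      Finset.prod_const, Finset.card_range]
    have hfv : (Nat.factorial v : ℚ) ≠ 0 := by positivity
    have hsign : (-1 : ℚ) ^ u = (-1 : ℚ) ^ m * (-1 : ℚ) ^ v := by
      rw [← zpow_natCast (-1 : ℚ) u, ← zpow_natCast (-1 : ℚ) v,
        ← zpow_add₀ (by norm_num : (-1:ℚ) ≠ 0)]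
      congr 1
      omega
    rw [zpow_natCast, hsign]
    field_simp
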